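/- Let f : ℝ → ℝ → ℝ satisfy |f(t,u₁) − f(t,u₂)| ≤ L|u₁ − u₂| for all t, u₁, u₂, with L ≥ 0. Let t ∈ ℝ, h ≥ 0, reals c₂ ≥ 0, c₃, a₃₁, a₃₂ and shape parameters e₂, e₃ ∈ ℝ; set E₂ = exp(−e₂ c₂² h²) and E₃ = exp(−e₃ c₃² h²). For w ∈ ℝ define k₁(w) = f(t,w), k₂(w) = f(t + c₂h, wE₂ + h c₂ k₁(w)), k₃(w) = f(t + c₃h, wE₃ + h(a₃₁k₁(w) + a₃₂k₂(w))). Then for all w₁, w₂ ∈ ℝ, |k₃(w₁) − k₃(w₂)| ≤ L(E₃ + (|a₃₁| + |a₃₂|E₂)hL + |a₃₂|c₂h²L²)|w₁ − w₂|. -/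
import Mathlib


/-- Lipschitz estimate for the third stage of the three-stage RBF Runge–Kutta method. -/
theorem stmt_5 (f : ℝ → ℝ → ℝ) (L : ℝ) (hL : 0 ≤ L)
    (hf : ∀ t u₁ u₂ : ℝ, |f t u₁ - f t u₂| ≤ L * |u₁ - u₂|)
    (t h c₂ c₃ a₃₁ a₃₂ e₂ e₃ E₂ E₃ : ℝ) (hh : 0 ≤ h) (hc₂ : 0 ≤ c₂)
    (hE₂ : E₂ = Real.exp (-e₂ * c₂ ^ 2 * h ^ 2))
    (hE₃ : E₃ = Real.exp (-e₃ * c₃ ^ 2 * h ^ 2))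
    (k₁ k₂ k₃ : ℝ → ℝ)
    (hk₁ : ∀ w, k₁ w = f t w)
    (hk₂ : ∀ w, k₂ w = f (t + c₂ * h) (w * E₂ + h * c₂ * k₁ w))
    (hk₃ : ∀ w, k₃ w = f (t + c₃ * h) (w * E₃ + h * (a₃₁ * k₁ w + a₃₂ * k₂ w))) :
    ∀ w₁ w₂ : ℝ,
      |k₃ w₁ - k₃ w₂|
        ≤ L * (E₃ + (|a₃₁| + |a₃₂| * E₂) * h * L + |a₃₂| * c₂ * h ^ 2 * L ^ 2) * |w₁ - w₂| := by
  intro w₁ w₂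
  have hE₂nonneg : 0 ≤ E₂ := hE₂ ▸ (Real.exp_pos _).le
  have hE₃nonneg : 0 ≤ E₃ := hE₃ ▸ (Real.exp_pos _).le
  have h1 : |k₁ w₁ - k₁ w₂| ≤ L * |w₁ - w₂| := by
    rw [hk₁, hk₁]; exact hf _ _ _
  have h2 : |k₂ w₁ - k₂ w₂| ≤ L * ((E₂ + h * c₂ * L) * |w₁ - w₂|) := by
    rw [hk₂, hk₂]
    refine (hf _ _ _).trans ?_
    have : |w₁ * E₂ + h * c₂ * k₁ w₁ - (w₂ * E₂ + h * c₂ * k₁ w₂)|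
        ≤ E₂ * |w₁ - w₂| + h * c₂ * |k₁ w₁ - k₁ w₂| := by
      have : w₁ * E₂ + h * c₂ * k₁ w₁ - (w₂ * E₂ + h * c₂ * k₁ w₂)
          = (w₁ - w₂) * E₂ + h * c₂ * (k₁ w₁ - k₁ w₂) := by ring
      rw [this]
      refine (abs_add_le _ _).trans ?_
      rw [abs_mul, abs_mul, abs_of_nonneg hE₂nonneg,
        abs_of_nonneg (mul_nonneg hh hc₂)]
      ring_nf; exact le_refl _
    refine (mul_le_mul_of_nonneg_left this hL).trans ?_
    have := mul_le_mul_of_nonneg_left h1 (mul_nonneg hh hc₂)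
    nlinarith [abs_nonneg (w₁ - w₂)]
  rw [hk₃, hk₃]
  refine (hf _ _ _).trans ?_
  have key : |w₁ * E₃ + h * (a₃₁ * k₁ w₁ + a₃₂ * k₂ w₁)
      - (w₂ * E₃ + h * (a₃₁ * k₁ w₂ + a₃₂ * k₂ w₂))|
      ≤ E₃ * |w₁ - w₂| + h * (|a₃₁| * |k₁ w₁ - k₁ w₂| + |a₃₂| * |k₂ w₁ - k₂ w₂|) := by
    have heq : w₁ * E₃ + h * (a₃₁ * k₁ w₁ + a₃₂ * k₂ w₁)
        - (w₂ * E₃ + h * (a₃₁ * k₁ w₂ + a₃₂ * k₂ w₂))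
        = (w₁ - w₂) * E₃ + h * (a₃₁ * (k₁ w₁ - k₁ w₂) + a₃₂ * (k₂ w₁ - k₂ w₂)) := by
      ring
    rw [heq]
    refine (abs_add_le _ _).trans ?_
    gcongr
    · rw [abs_mul, abs_of_nonneg hE₃nonneg, mul_comm]
    · rw [abs_mul, abs_of_nonneg hh]
      gcongr
      refine (abs_add_le _ _).trans ?_
      rw [abs_mul, abs_mul]
  refine (mul_le_mul_of_nonneg_left key hL).trans ?_
  have hb1 := mul_le_mul_of_nonneg_left h1 (abs_nonneg a₃₁)
  have hb2 := mul_le_mul_of_nonneg_left h2 (abs_nonneg a₃₂)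
  nlinarith [abs_nonneg (w₁ - w₂), mul_nonneg hL hh, abs_nonneg a₃₂, abs_nonneg a₃₁,
    mul_nonneg (mul_nonneg hL hL) hh]
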